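/- arXiv:1112.1191 — 5 statements merged into one kernel-verified Lean document; each statement's English description precedes it below -/
import Mathlib

section
/- Let X be a connected compact Hausdorff space and J a free interval of X such that X \ J is disconnected. Then X \ J has exactly two connected components. -/
open Set Topology

/-- A directed (by reverse inclusion) intersection of nonempty compact preconnected
sets in a Hausdorff space is preconnected. -/
lemma aux_iInter_preconnected {X : Type*} [TopologicalSpace X] [T2Space X]
    {ι : Type*} [Nonempty ι] (C : ι → Set X)
    (hdir : Directed (· ⊇ ·) C)
    (hcomp : ∀ t, IsCompact (C t)) (hconn : ∀ t, IsPreconnected (C t)) :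
    IsPreconnected (⋂ t, C t) := by
  set L := ⋂ t, C t with hL
  rintro u v hu hv hsub ⟨a, haL, hau⟩ ⟨b, hbL, hbv⟩
  by_contra hne
  rw [Set.not_nonempty_iff_eq_empty] at hne
  have hLcl : IsClosed L := isClosed_iInter fun t => (hcomp t).isClosed
  have hLcomp : IsCompact L :=
    (hcomp (Classical.arbitrary ι)).of_isClosed_subset hLcl (iInter_subset _ _)
  have hK1 : L ∩ u = L \ v := by
    apply Subset.antisymm
    · rintro x ⟨hxL, hxu⟩
      refine ⟨hxL, fun hxv => ?_⟩
      have : x ∈ L ∩ (u ∩ v) := ⟨hxL, hxu, hxv⟩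
      simp [hne] at this
    · rintro x ⟨hxL, hxv⟩
      rcases hsub hxL with h | h
      · exact ⟨hxL, h⟩
      · exact absurd h hxv
  have hK2 : L ∩ v = L \ u := by
    apply Subset.antisymm
    · rintro x ⟨hxL, hxv⟩
      refine ⟨hxL, fun hxu => ?_⟩
      have : x ∈ L ∩ (u ∩ v) := ⟨hxL, hxu, hxv⟩
      simp [hne] at this
    · rintro x ⟨hxL, hxu⟩
      rcases hsub hxL with h | h
      · exact absurd h hxu
      · exact ⟨hxL, h⟩
  have hK1c : IsCompact (L ∩ u) := by
    rw [hK1]; exact hLcomp.inter_right hv.isClosed_compl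
  have hK2c : IsCompact (L ∩ v) := by
    rw [hK2]; exact hLcomp.inter_right hu.isClosed_compl
  have hdisj : Disjoint (L ∩ u) (L ∩ v) := by
    rw [Set.disjoint_left]
    rintro x ⟨hxL, hxu⟩ ⟨-, hxv⟩
    have : x ∈ L ∩ (u ∩ v) := ⟨hxL, hxu, hxv⟩
    simp [hne] at this
  obtain ⟨U, V, hU, hV, hK1U, hK2V, hUV⟩ :=
    SeparatedNhds.of_isCompact_isCompact hK1c hK2c hdisj
  have hLUV : L ⊆ U ∪ V := by
    intro x hx
    rcases hsub hx with h | h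
    · exact Or.inl (hK1U ⟨hx, h⟩)
    · exact Or.inr (hK2V ⟨hx, h⟩)
  -- find a single C t inside U ∪ V
  have hex : ∃ t, C t ⊆ U ∪ V := by
    by_contra hno
    push_neg at hno
    have hne' : ∀ t, (C t ∩ (U ∪ V)ᶜ).Nonempty := by
      intro t
      obtain ⟨x, hx, hx'⟩ := Set.not_subset.mp (hno t)
      exact ⟨x, hx, hx'⟩
    have := IsCompact.nonempty_iInter_of_directed_nonempty_isCompact_isClosed
      (fun t => C t ∩ (U ∪ V)ᶜ)
      (fun i j => by
        obtain ⟨k, hk1, hk2⟩ := hdir i j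
        exact ⟨k, inter_subset_inter_left _ hk1, inter_subset_inter_left _ hk2⟩)
      hne'
      (fun t => (hcomp t).inter_right (hU.union hV).isClosed_compl)
      (fun t => (hcomp t).isClosed.inter (hU.union hV).isClosed_compl)
    obtain ⟨x, hx⟩ := this
    simp only [Set.mem_iInter, Set.mem_inter_iff, Set.mem_compl_iff] at hx
    have hxL : x ∈ L := mem_iInter.mpr fun t => (hx t).1
    exact (hx (Classical.arbitrary ι)).2 (hLUV hxL)
  obtain ⟨t, ht⟩ := hex
  have h1 : (C t ∩ U).Nonempty := ⟨a, iInter_subset _ t haL, hK1U ⟨haL, hau⟩⟩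
  have h2 : (C t ∩ V).Nonempty := ⟨b, iInter_subset _ t hbL, hK2V ⟨hbL, hbv⟩⟩
  obtain ⟨x, hx⟩ := hconn t U V hU hV ht h1 h2
  exact Set.disjoint_left.mp hUV hx.2.1 hx.2.2

/-- If `X` is a connected compact Hausdorff space and `J` a free interval
with `X \ J` disconnected, then `X \ J` has exactly two connected components. -/
theorem stmt14 {X : Type*} [TopologicalSpace X] [CompactSpace X] [ConnectedSpace X]
    [T2Space X] (J : Set X) (hJopen : IsOpen J) (hJfree : Nonempty (↥J ≃ₜ ℝ))
    (hdisc : ¬ IsPreconnected (Jᶜ : Set X)) :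
    ∃ A B : Set X, A ≠ B ∧
      {C : Set X | ∃ x ∈ (Jᶜ : Set X), C = connectedComponentIn Jᶜ x} = {A, B} := by
  classical
  obtain ⟨φ⟩ := hJfree
  set K : Set X := Jᶜ with hKdef
  have hKcl : IsClosed K := hJopen.isClosed_compl
  set e : ℝ → X := fun t => ((φ.symm t : ↥J) : X) with he
  have hemb : IsOpenEmbedding e :=
    hJopen.isOpenEmbedding_subtypeVal.comp φ.symm.isOpenEmbedding
  have hecont : Continuous e := hemb.continuous
  have heinj : Function.Injective e := hemb.injective
  have herange : range e = J := by
    have he2 : e = (Subtype.val ∘ (φ.symm : ℝ → ↥J)) := rfl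
    rw [he2, Set.range_comp, φ.symm.surjective.range_eq, Set.image_univ, Subtype.range_coe]
  have heJ : ∀ t, e t ∈ J := fun t => herange ▸ mem_range_self t
  -- the two "ends"
  set Cp : ℝ → Set X := fun t => closure (e '' Set.Ioi t) with hCp
  set Cn : ℝ → Set X := fun t => closure (e '' Set.Iio t) with hCn
  set Lp : Set X := ⋂ t, Cp t with hLp
  set Ln : Set X := ⋂ t, Cn t with hLn
  have hCp_mono : ∀ {a b : ℝ}, a ≤ b → Cp b ⊆ Cp a := fun hab =>
    closure_mono (image_mono (Ioi_subset_Ioi hab))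
  have hCn_mono : ∀ {a b : ℝ}, a ≤ b → Cn a ⊆ Cn b := fun hab =>
    closure_mono (image_mono (Iio_subset_Iio hab))
  have hCp_dir : Directed (· ⊇ ·) Cp := fun i j =>
    ⟨max i j, hCp_mono (le_max_left i j), hCp_mono (le_max_right i j)⟩
  have hCn_dir : Directed (· ⊇ ·) Cn := fun i j =>
    ⟨min i j, hCn_mono (min_le_left i j), hCn_mono (min_le_right i j)⟩
  have hCp_comp : ∀ t, IsCompact (Cp t) := fun t => isClosed_closure.isCompact
  have hCn_comp : ∀ t, IsCompact (Cn t) := fun t => isClosed_closure.isCompact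
  have hCp_conn : ∀ t, IsPreconnected (Cp t) := fun t =>
    ((isPreconnected_Ioi.image e hecont.continuousOn)).closure
  have hCn_conn : ∀ t, IsPreconnected (Cn t) := fun t =>
    ((isPreconnected_Iio.image e hecont.continuousOn)).closure
  have hCp_ne : ∀ t, (Cp t).Nonempty := fun t =>
    ((nonempty_Ioi.image e)).mono subset_closure
  have hCn_ne : ∀ t, (Cn t).Nonempty := fun t =>
    ((nonempty_Iio.image e)).mono subset_closure
  -- a point of J is not in the closure of the image of a disjoint set
  have hsep : ∀ (a b : Set ℝ), Disjoint a b → IsOpen a → ∀ s ∈ a, e s ∉ closure (e '' b) := by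
    intro a b hab ha s hs hmem
    have hopen : IsOpen (e '' a) := hemb.isOpenMap _ ha
    have hsubc : e '' b ⊆ (e '' a)ᶜ := by
      rintro _ ⟨x, hx, rfl⟩ ⟨y, hy, hxy⟩
      exact hab.ne_of_mem (heinj hxy ▸ hy) hx rfl
    have := closure_minimal hsubc hopen.isClosed_compl hmem
    exact this ⟨s, hs, rfl⟩
  have hLpJ : ∀ x ∈ Lp, x ∉ J := by
    intro x hx hxJ
    obtain ⟨s, rfl⟩ : x ∈ range e := herange ▸ hxJ
    have := mem_iInter.mp hx (s + 1)
    exact hsep (Set.Iio (s + 1)) (Set.Ioi (s + 1)) (Iio_disjoint_Ici le_rfl |>.mono_right Set.Ioi_subset_Ici_self) isOpen_Iio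
      s (by simp) this
  have hLnJ : ∀ x ∈ Ln, x ∉ J := by
    intro x hx hxJ
    obtain ⟨s, rfl⟩ : x ∈ range e := herange ▸ hxJ
    have := mem_iInter.mp hx (s - 1)
    exact hsep (Set.Ioi (s - 1)) (Set.Iio (s - 1)) ((Iio_disjoint_Ici le_rfl |>.mono_right Set.Ioi_subset_Ici_self)).symm isOpen_Ioi
      s (by simp) this
  have hLpK : Lp ⊆ K := fun x hx => hLpJ x hx
  have hLnK : Ln ⊆ K := fun x hx => hLnJ x hx
  -- frontier of J is contained in Lp ∪ Ln
  set F : Set X := closure J \ J with hF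
  have hFK : F ⊆ K := fun x hx => hx.2
  have hfr : F ⊆ Lp ∪ Ln := by
    rintro x ⟨hxcl, hxJ⟩
    by_contra hx
    simp only [Set.mem_union, not_or] at hx
    obtain ⟨hx1, hx2⟩ := hx
    simp only [hLp, hLn, mem_iInter, not_forall] at hx1 hx2
    obtain ⟨a, ha⟩ := hx1
    obtain ⟨b, hb⟩ := hx2
    set l := min a b
    set u := max a b
    have hxp : x ∉ Cp u := fun h => ha (hCp_mono (le_max_left a b) h)
    have hxn : x ∉ Cn l := fun h => hb (hCn_mono (min_le_right a b) h)
    have hcover : (Set.univ : Set ℝ) = Set.Iio l ∪ Set.Icc l u ∪ Set.Ioi u := by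
      ext t
      simp only [mem_univ, true_iff, mem_union, mem_Iio, mem_Icc, mem_Ioi]
      rcases lt_or_ge t l with h | h
      · exact Or.inl (Or.inl h)
      · rcases le_or_gt t u with h' | h'
        · exact Or.inl (Or.inr ⟨h, h'⟩)
        · exact Or.inr h'
    have hJeq : J = e '' Set.univ := by rw [image_univ, herange]
    have : closure J ⊆ Cn l ∪ e '' Set.Icc l u ∪ Cp u := by
      rw [hJeq, hcover, image_union, image_union]
      have hIccCl : IsClosed (e '' Set.Icc l u) := (isCompact_Icc.image hecont).isClosed
      calc closure (e '' Set.Iio l ∪ e '' Set.Icc l u ∪ e '' Set.Ioi u)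
          ⊆ closure (e '' Set.Iio l) ∪ closure (e '' Set.Icc l u) ∪
            closure (e '' Set.Ioi u) := by
            rw [closure_union, closure_union]
        _ ⊆ Cn l ∪ e '' Set.Icc l u ∪ Cp u := by
            rw [hIccCl.closure_eq]
    rcases this hxcl with (h | h) | h
    · exact hxn h
    · exact hxJ (hJeq ▸ image_mono (f := e) (subset_univ _) h)
    · exact hxp h
  -- J is nonempty
  have hJne : J.Nonempty := ⟨e 0, heJ 0⟩
  -- the star lemma: a clopen-in-K set avoiding the frontier is empty
  have hstar : ∀ A : Set X, A ⊆ K → IsClosed A → IsClosed (K \ A) → F ∩ A = ∅ → A = ∅ := by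
    intro A hAK hAcl hKAcl hFA
    have hWeq : Aᶜ = J ∪ (K \ A) := by
      ext x
      simp only [mem_compl_iff, mem_union, mem_diff]
      constructor
      · intro hx
        by_cases hxJ : x ∈ J
        · exact Or.inl hxJ
        · exact Or.inr ⟨hxJ, hx⟩
      · rintro (hx | ⟨_, hx⟩)
        · exact fun hA => (hAK hA) hx
        · exact hx
    have hWopen : IsOpen (Aᶜ) := hAcl.isOpen_compl
    have hWclosed : IsClosed (Aᶜ) := by
      rw [hWeq]
      have : closure (J ∪ (K \ A)) ⊆ J ∪ (K \ A) := by
        rw [closure_union, hKAcl.closure_eq]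
        apply union_subset _ subset_union_right
        intro x hx
        by_cases hxJ : x ∈ J
        · exact Or.inl hxJ
        · refine Or.inr ⟨hxJ, fun hA => ?_⟩
          have : x ∈ F ∩ A := ⟨⟨hx, hxJ⟩, hA⟩
          simp [hFA] at this
      exact isClosed_of_closure_subset this
    rcases isClopen_iff.mp ⟨hWclosed, hWopen⟩ with h | h
    · obtain ⟨x, hx⟩ := hJne
      have : x ∈ Aᶜ := fun hA => (hAK hA) hx
      simp [h] at this
    · have : A = Aᶜᶜ := (compl_compl A).symm
      rw [this, h, compl_univ]
  -- subtype instances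
  haveI : CompactSpace ↥K := isCompact_iff_compactSpace.mp hKcl.isCompact
  -- every connected component in K meets the frontier F
  have hmeet : ∀ x : ↥K, ((Subtype.val '' connectedComponent x) ∩ F).Nonempty := by
    intro x
    by_contra hcon
    rw [Set.not_nonempty_iff_eq_empty] at hcon
    set F' : Set ↥K := Subtype.val ⁻¹' F with hF'
    have hF'comp : IsCompact F' :=
      (IsClosed.preimage continuous_subtype_val
        (isClosed_closure.inter hJopen.isClosed_compl)).isCompact
    have hempty : F' ∩ ⋂ Z : { Z : Set ↥K // IsClopen Z ∧ x ∈ Z }, (Z : Set ↥K) = ∅ := by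
      rw [← connectedComponent_eq_iInter_isClopen x]
      ext y
      simp only [mem_inter_iff, mem_empty_iff_false, iff_false, not_and]
      intro hyF hyC
      have : (y : X) ∈ (Subtype.val '' connectedComponent x) ∩ F :=
        ⟨mem_image_of_mem _ hyC, hyF⟩
      simp [hcon] at this
    obtain ⟨u, hu⟩ := hF'comp.elim_finite_subfamily_closed _
      (fun Z => Z.2.1.1) hempty
    set Z₀ : Set ↥K := ⋂ Z ∈ u, (Z : Set ↥K) with hZ₀
    have hZ₀clopen : IsClopen Z₀ := isClopen_biInter_finset fun Z _ => Z.2.1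
    have hxZ₀ : x ∈ Z₀ := mem_biInter fun Z _ => Z.2.2
    set A : Set X := Subtype.val '' Z₀ with hA
    have hAK : A ⊆ K := by rintro _ ⟨y, _, rfl⟩; exact y.2
    have hAcl : IsClosed A :=
      ((hZ₀clopen.1.isCompact).image continuous_subtype_val).isClosed
    have hKA : K \ A = Subtype.val '' Z₀ᶜ := by
      ext y
      simp only [mem_diff, mem_image]
      constructor
      · rintro ⟨hyK, hyA⟩
        exact ⟨⟨y, hyK⟩, fun h => hyA ⟨⟨y, hyK⟩, h, rfl⟩, rfl⟩
      · rintro ⟨z, hz, rfl⟩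
        refine ⟨z.2, fun ⟨w, hw, hwz⟩ => hz ?_⟩
        rwa [← Subtype.coe_injective hwz]
    have hKAcl : IsClosed (K \ A) := by
      rw [hKA]
      exact ((hZ₀clopen.compl.1.isCompact).image continuous_subtype_val).isClosed
    have hFA : F ∩ A = ∅ := by
      ext y
      simp only [mem_inter_iff, mem_empty_iff_false, iff_false, not_and]
      rintro hyF ⟨z, hz, rfl⟩
      have hmem : z ∈ F' ∩ ⋂ Z ∈ u, (Z : Set ↥K) := ⟨hyF, hz⟩
      rw [hu] at hmem
      exact hmem
    have hAe := hstar A hAK hAcl hKAcl hFA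
    have hxA : (x : X) ∈ A := mem_image_of_mem _ hxZ₀
    rw [hAe] at hxA
    exact hxA
  -- Lp and Ln are nonempty, pick points
  obtain ⟨p, hp⟩ := IsCompact.nonempty_iInter_of_directed_nonempty_isCompact_isClosed
    Cp hCp_dir hCp_ne hCp_comp (fun t => isClosed_closure)
  obtain ⟨q, hq⟩ := IsCompact.nonempty_iInter_of_directed_nonempty_isCompact_isClosed
    Cn hCn_dir hCn_ne hCn_comp (fun t => isClosed_closure)
  have hpK : p ∈ K := hLpK hp
  have hqK : q ∈ K := hLnK hq
  have hLpconn : IsPreconnected Lp :=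
    aux_iInter_preconnected Cp hCp_dir hCp_comp hCp_conn
  have hLnconn : IsPreconnected Ln :=
    aux_iInter_preconnected Cn hCn_dir hCn_comp hCn_conn
  set A : Set X := connectedComponentIn K p with hAdef
  set B : Set X := connectedComponentIn K q with hBdef
  -- classification
  have hclass : ∀ x ∈ K, connectedComponentIn K x = A ∨ connectedComponentIn K x = B := by
    intro x hx
    obtain ⟨y, hy1, hy2⟩ := hmeet ⟨x, hx⟩
    rw [← connectedComponentIn_eq_image hx] at hy1
    rcases hfr hy2 with hyLp | hyLn
    · left
      have h1 : connectedComponentIn K x = connectedComponentIn K y :=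
        connectedComponentIn_eq hy1
      have h2 : Lp ⊆ connectedComponentIn K y :=
        hLpconn.subset_connectedComponentIn hyLp hLpK
      have h3 : connectedComponentIn K y = connectedComponentIn K p :=
        connectedComponentIn_eq (h2 hp)
      rw [h1, h3]
    · right
      have h1 : connectedComponentIn K x = connectedComponentIn K y :=
        connectedComponentIn_eq hy1
      have h2 : Ln ⊆ connectedComponentIn K y :=
        hLnconn.subset_connectedComponentIn hyLn hLnK
      have h3 : connectedComponentIn K y = connectedComponentIn K q :=
        connectedComponentIn_eq (h2 hq)
      rw [h1, h3]
  -- A ≠ B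
  have hne : A ≠ B := by
    intro hAB
    apply hdisc
    have hKA : K = A := by
      apply Subset.antisymm
      · intro x hx
        rcases hclass x hx with h | h
        · rw [← h]; exact mem_connectedComponentIn hx
        · rw [hAB, ← h]; exact mem_connectedComponentIn hx
      · exact connectedComponentIn_subset K p
    show IsPreconnected K
    rw [hKA]
    exact isPreconnected_connectedComponentIn
  refine ⟨A, B, hne, ?_⟩
  ext C
  simp only [mem_setOf_eq, mem_insert_iff, mem_singleton_iff]
  constructor
  · rintro ⟨x, hx, rfl⟩
    exact hclass x hx
  · rintro (rfl | rfl)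
    · exact ⟨p, hpK, rfl⟩
    · exact ⟨q, hqK, rfl⟩
end

section
/- Let X be a connected compact Hausdorff space and J a free interval of X such that X \ J is disconnected. Then the boundary ∂J of J is nowhere dense in X and has exactly two connected components. -/
open Set Topology

/-- A closed non-preconnected set splits into two disjoint nonempty closed pieces. -/
lemma stmt15_sep {X : Type*} [TopologicalSpace X] {K : Set X} (hK : IsClosed K)
    (h : ¬ IsPreconnected K) :
    ∃ A B : Set X, IsClosed A ∧ IsClosed B ∧ A ∪ B = K ∧ A ∩ B = ∅ ∧
      A.Nonempty ∧ B.Nonempty := by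
  rw [isPreconnected_iff_subset_of_fully_disjoint_closed hK] at h
  push_neg at h
  obtain ⟨t, t', ht, ht', hsub, hdisj, hnt, hnt'⟩ := h
  refine ⟨K ∩ t, K ∩ t', hK.inter ht, hK.inter ht', ?_, ?_, ?_, ?_⟩
  · rw [← inter_union_distrib_left, inter_eq_left]; exact hsub
  · have : (K ∩ t) ∩ (K ∩ t') ⊆ t ∩ t' := fun x hx => ⟨hx.1.2, hx.2.2⟩
    rw [← subset_empty_iff]
    exact this.trans (by rw [hdisj.inter_eq])
  · obtain ⟨x, hxK, hxt'⟩ := not_subset.1 hnt'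
    exact ⟨x, hxK, (hsub hxK).resolve_right hxt'⟩
  · obtain ⟨x, hxK, hxt⟩ := not_subset.1 hnt
    exact ⟨x, hxK, (hsub hxK).resolve_left hxt⟩

/-- Nested intersection of nonempty compact closed preconnected sets is preconnected. -/
lemma stmt15_iInter {X : Type*} [TopologicalSpace X] [T2Space X] [NormalSpace X]
    (C : ℕ → Set X) (hanti : ∀ m n, m ≤ n → C n ⊆ C m)
    (hne : ∀ n, (C n).Nonempty) (hc : ∀ n, IsCompact (C n))
    (hconn : ∀ n, IsPreconnected (C n)) :
    IsPreconnected (⋂ n, C n) := by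
  have hcl : ∀ n, IsClosed (C n) := fun n => (hc n).isClosed
  by_contra h
  obtain ⟨A, B, hA, hB, hunion, hinter, hAne, hBne⟩ :=
    stmt15_sep (isClosed_iInter hcl) h
  obtain ⟨U, V, hU, hV, hAU, hBV, hUV⟩ :=
    normal_separation hA hB (disjoint_iff_inter_eq_empty.2 hinter)
  have hKsub : (⋂ n, C n) ⊆ U ∪ V := by
    rw [← hunion]; exact union_subset_union hAU hBV
  -- each C n \ (U ∪ V) is nonempty
  have hKCn : ∀ n, A ∪ B ⊆ C n := fun n => hunion ▸ iInter_subset C n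
  have hDne : ∀ n, (C n \ (U ∪ V)).Nonempty := by
    intro n
    by_contra hcon
    rw [not_nonempty_iff_eq_empty, diff_eq_empty] at hcon
    have h1 : (C n ∩ U).Nonempty := by
      obtain ⟨a, ha⟩ := hAne
      exact ⟨a, hKCn n (Or.inl ha), hAU ha⟩
    have h2 : (C n ∩ V).Nonempty := by
      obtain ⟨b, hb⟩ := hBne
      exact ⟨b, hKCn n (Or.inr hb), hBV hb⟩
    obtain ⟨x, -, hxU, hxV⟩ := hconn n U V hU hV hcon h1 h2
    exact hUV.ne_of_mem hxU hxV rfl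
  have hdir : Directed (· ⊇ ·) (fun n => C n \ (U ∪ V)) := fun m n =>
    ⟨max m n, diff_subset_diff_left (hanti m _ (le_max_left m n)),
      diff_subset_diff_left (hanti n _ (le_max_right m n))⟩
  obtain ⟨x, hx⟩ := IsCompact.nonempty_iInter_of_directed_nonempty_isCompact_isClosed
    (fun n => C n \ (U ∪ V)) hdir hDne
    (fun n => (hc n).diff (hU.union hV))
    (fun n => (hcl n).sdiff (hU.union hV))
  simp only [mem_iInter, mem_diff] at hx
  exact (hx 0).2 (hKsub (mem_iInter.2 fun n => (hx n).1))

/-- In a disjoint closed decomposition `S = P ∪ Q`, the connected component in `S` of a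
point of the preconnected piece `P` is exactly `P`. -/
lemma stmt15_comp_eq {X : Type*} [TopologicalSpace X] {S P Q : Set X}
    (hP : IsPreconnected P) (hPc : IsClosed P) (hQc : IsClosed Q)
    (hunion : P ∪ Q = S) (hdisj : P ∩ Q = ∅) {x : X} (hxP : x ∈ P) :
    connectedComponentIn S x = P := by
  have hxS : x ∈ S := hunion ▸ Or.inl hxP
  have hPS : P ⊆ S := hunion ▸ subset_union_left
  refine le_antisymm ?_ (hP.subset_connectedComponentIn hxP hPS)
  have hsub : connectedComponentIn S x ⊆ P ∪ Q :=
    hunion ▸ connectedComponentIn_subset S x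
  have hQe : connectedComponentIn S x ∩ Q = ∅ := by
    by_contra hne
    rw [← ne_eq, ← nonempty_iff_ne_empty] at hne
    obtain ⟨y, -, hyP, hyQ⟩ := isPreconnected_closed_iff.1
      isPreconnected_connectedComponentIn P Q hPc hQc hsub
      ⟨x, mem_connectedComponentIn hxS, hxP⟩ hne
    exact absurd (hdisj ▸ ⟨hyP, hyQ⟩) (notMem_empty y)
  intro y hy
  rcases hsub hy with h | h
  · exact h
  · exact absurd (hQe ▸ ⟨hy, h⟩ : y ∈ (∅ : Set X)) (notMem_empty y)

lemma stmt15_two_comps {X : Type*} [TopologicalSpace X] {S P Q : Set X}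
    (hP : IsPreconnected P) (hQ : IsPreconnected Q) (hPc : IsClosed P) (hQc : IsClosed Q)
    (hPne : P.Nonempty) (hQne : Q.Nonempty)
    (hunion : P ∪ Q = S) (hdisj : P ∩ Q = ∅) :
    ∃ A B : Set X, A ≠ B ∧
      {C : Set X | ∃ x ∈ S, C = connectedComponentIn S x} = {A, B} := by
  have hdisj' : Q ∩ P = ∅ := by rw [inter_comm]; exact hdisj
  have hunion' : Q ∪ P = S := by rw [union_comm]; exact hunion
  refine ⟨P, Q, ?_, ?_⟩
  · intro hPQ
    obtain ⟨p, hp⟩ := hPne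
    exact absurd (hdisj ▸ ⟨hp, hPQ ▸ hp⟩ : p ∈ (∅ : Set X)) (notMem_empty p)
  · ext C
    simp only [mem_setOf_eq, mem_insert_iff, mem_singleton_iff]
    constructor
    · rintro ⟨x, hxS, rfl⟩
      rcases (hunion ▸ hxS : x ∈ P ∪ Q) with h | h
      · exact Or.inl (stmt15_comp_eq hP hPc hQc hunion hdisj h)
      · exact Or.inr (stmt15_comp_eq hQ hQc hPc hunion' hdisj' h)
    · rintro (rfl | rfl)
      · obtain ⟨p, hp⟩ := hPne
        exact ⟨p, hunion ▸ Or.inl hp, (stmt15_comp_eq hP hPc hQc hunion hdisj hp).symm⟩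
      · obtain ⟨q, hq⟩ := hQne
        exact ⟨q, hunion ▸ Or.inr hq, (stmt15_comp_eq hQ hQc hPc hunion' hdisj' hq).symm⟩
/-- If `X` is a connected compact Hausdorff space and `J` a free interval
with `X \ J` disconnected, then the boundary of `J` is nowhere dense and has exactly two
connected components. -/
theorem stmt15 {X : Type*} [TopologicalSpace X] [CompactSpace X] [ConnectedSpace X]
    [T2Space X] (J : Set X) (hJopen : IsOpen J) (hJfree : Nonempty (↥J ≃ₜ ℝ))
    (hdisc : ¬ IsPreconnected (Jᶜ : Set X)) :
    interior (closure (frontier J)) = ∅ ∧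
      ∃ A B : Set X, A ≠ B ∧
        {C : Set X | ∃ x ∈ frontier J, C = connectedComponentIn (frontier J) x}
          = {A, B} := by
  have hfr : frontier J = closure J \ J := hJopen.frontier_eq
  constructor
  · rw [isClosed_frontier.closure_eq, ← frontier_compl]
    exact interior_frontier hJopen.isClosed_compl
  obtain ⟨h⟩ := hJfree
  have hemb : Topology.IsEmbedding ((↑) : ↥J → X) :=
    hJopen.isOpenEmbedding_subtypeVal.isEmbedding
  -- the two end-neighborhood systems
  set E : ℕ → Set X := fun n => (↑) '' (h ⁻¹' Ioi (n : ℝ)) with hE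
  set F : ℕ → Set X := fun n => (↑) '' (h ⁻¹' Iio (-(n : ℝ))) with hF
  have hEJ : ∀ n, E n ⊆ J := fun n => by
    rintro x ⟨y, -, rfl⟩; exact y.2
  have hFJ : ∀ n, F n ⊆ J := fun n => by
    rintro x ⟨y, -, rfl⟩; exact y.2
  have hEne : ∀ n, (E n).Nonempty := fun n =>
    ⟨(h.symm ((n : ℝ) + 1) : ↥J), ⟨h.symm ((n : ℝ) + 1), by simp, rfl⟩⟩
  have hFne : ∀ n, (F n).Nonempty := fun n =>
    ⟨(h.symm (-(n : ℝ) - 1) : ↥J), ⟨h.symm (-(n : ℝ) - 1), by simp, rfl⟩⟩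
  have hEconn : ∀ n, IsPreconnected (E n) := fun n => by
    have : h ⁻¹' Ioi (n : ℝ) = h.symm '' Ioi (n : ℝ) :=
      (congrFun h.image_symm (Ioi (n : ℝ))).symm
    rw [hE]
    refine IsPreconnected.image ?_ _ continuous_subtype_val.continuousOn
    rw [this]
    exact isPreconnected_Ioi.image _ h.symm.continuous.continuousOn
  have hFconn : ∀ n, IsPreconnected (F n) := fun n => by
    have : h ⁻¹' Iio (-(n : ℝ)) = h.symm '' Iio (-(n : ℝ)) :=
      (congrFun h.image_symm (Iio (-(n : ℝ)))).symm
    rw [hF]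
    refine IsPreconnected.image ?_ _ continuous_subtype_val.continuousOn
    rw [this]
    exact isPreconnected_Iio.image _ h.symm.continuous.continuousOn
  have hEanti : ∀ m n : ℕ, m ≤ n → E n ⊆ E m := fun m n hmn =>
    image_mono (preimage_mono (Ioi_subset_Ioi (by exact_mod_cast hmn)))
  have hFanti : ∀ m n : ℕ, m ≤ n → F n ⊆ F m := fun m n hmn =>
    image_mono (preimage_mono (Iio_subset_Iio (by
      have : (m : ℝ) ≤ n := by exact_mod_cast hmn
      linarith)))
  set Kp : Set X := ⋂ n, closure (E n) with hKp
  set Km : Set X := ⋂ n, closure (F n) with hKm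
  have hcEanti : ∀ m n : ℕ, m ≤ n → closure (E n) ⊆ closure (E m) :=
    fun m n hmn => closure_mono (hEanti m n hmn)
  have hcFanti : ∀ m n : ℕ, m ≤ n → closure (F n) ⊆ closure (F m) :=
    fun m n hmn => closure_mono (hFanti m n hmn)
  have hcEcomp : ∀ n, IsCompact (closure (E n)) := fun n => isClosed_closure.isCompact
  have hcFcomp : ∀ n, IsCompact (closure (F n)) := fun n => isClosed_closure.isCompact
  have hEdir : Directed (· ⊇ ·) (fun n => closure (E n)) := fun m n =>
    ⟨max m n, hcEanti m _ (le_max_left m n), hcEanti n _ (le_max_right m n)⟩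
  have hFdir : Directed (· ⊇ ·) (fun n => closure (F n)) := fun m n =>
    ⟨max m n, hcFanti m _ (le_max_left m n), hcFanti n _ (le_max_right m n)⟩
  have hKpne : Kp.Nonempty :=
    IsCompact.nonempty_iInter_of_directed_nonempty_isCompact_isClosed _ hEdir
      (fun n => (hEne n).closure) hcEcomp (fun n => isClosed_closure)
  have hKmne : Km.Nonempty :=
    IsCompact.nonempty_iInter_of_directed_nonempty_isCompact_isClosed _ hFdir
      (fun n => (hFne n).closure) hcFcomp (fun n => isClosed_closure)
  have hKpconn : IsPreconnected Kp :=
    stmt15_iInter _ hcEanti (fun n => (hEne n).closure) hcEcomp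
      (fun n => (hEconn n).closure)
  have hKmconn : IsPreconnected Km :=
    stmt15_iInter _ hcFanti (fun n => (hFne n).closure) hcFcomp
      (fun n => (hFconn n).closure)
  have hKpcl : IsClosed Kp := isClosed_iInter fun n => isClosed_closure
  have hKmcl : IsClosed Km := isClosed_iInter fun n => isClosed_closure
  -- Kp and Km avoid J
  have hKpJ : Kp ∩ J = ∅ := by
    rw [eq_empty_iff_forall_notMem]
    rintro x ⟨hxKp, hxJ⟩
    obtain ⟨n, hn⟩ := exists_nat_gt (h ⟨x, hxJ⟩)
    have hx : (⟨x, hxJ⟩ : ↥J) ∈ closure (h ⁻¹' Ioi (n : ℝ)) := by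
      rw [hemb.closure_eq_preimage_closure_image]
      exact mem_iInter.1 hxKp n
    rw [← h.preimage_closure, closure_Ioi] at hx
    exact absurd hn (not_lt.2 hx)
  have hKmJ : Km ∩ J = ∅ := by
    rw [eq_empty_iff_forall_notMem]
    rintro x ⟨hxKm, hxJ⟩
    obtain ⟨n, hn⟩ := exists_nat_gt (-(h ⟨x, hxJ⟩))
    have hx : (⟨x, hxJ⟩ : ↥J) ∈ closure (h ⁻¹' Iio (-(n : ℝ))) := by
      rw [hemb.closure_eq_preimage_closure_image]
      exact mem_iInter.1 hxKm n
    rw [← h.preimage_closure, closure_Iio] at hx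
    simp only [mem_preimage, mem_Iic] at hx
    linarith
  have hKpfr : Kp ⊆ frontier J := by
    intro x hx
    rw [hfr, mem_diff]
    exact ⟨closure_mono (hEJ 0) (mem_iInter.1 hx 0),
      fun hxJ => (eq_empty_iff_forall_notMem.1 hKpJ x) ⟨hx, hxJ⟩⟩
  have hKmfr : Km ⊆ frontier J := by
    intro x hx
    rw [hfr, mem_diff]
    exact ⟨closure_mono (hFJ 0) (mem_iInter.1 hx 0),
      fun hxJ => (eq_empty_iff_forall_notMem.1 hKmJ x) ⟨hx, hxJ⟩⟩
  -- the frontier is contained in the union of the two end cluster sets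
  have hfrsub : frontier J ⊆ Kp ∪ Km := by
    intro x hx
    rw [hfr, mem_diff] at hx
    obtain ⟨hxcl, hxJ⟩ := hx
    have hEF : ∀ n : ℕ, x ∈ closure (E n) ∪ closure (F n) := by
      intro n
      set C : Set X := (↑) '' (h.symm '' Icc (-(n : ℝ)) (n : ℝ)) with hC
      have hCcomp : IsCompact C :=
        ((isCompact_Icc).image h.symm.continuous).image continuous_subtype_val
      have hCJ : C ⊆ J := by rintro y ⟨z, -, rfl⟩; exact z.2
      have hJsub : J ⊆ C ∪ (E n ∪ F n) := by
        intro y hy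
        rcases le_or_gt (h ⟨y, hy⟩) (n : ℝ) with h1 | h1
        · rcases le_or_gt (-(n : ℝ)) (h ⟨y, hy⟩) with h2 | h2
          · exact Or.inl ⟨h.symm (h ⟨y, hy⟩), ⟨h ⟨y, hy⟩, ⟨h2, h1⟩, rfl⟩, by simp⟩
          · exact Or.inr (Or.inr ⟨⟨y, hy⟩, h2, rfl⟩)
        · exact Or.inr (Or.inl ⟨⟨y, hy⟩, h1, rfl⟩)
      have hcl2 := closure_mono hJsub hxcl
      rw [closure_union, closure_union, (hCcomp.isClosed).closure_eq] at hcl2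
      rcases hcl2 with h1 | h1
      · exact absurd (hCJ h1) hxJ
      · exact h1
    by_cases hxp : x ∈ Kp
    · exact Or.inl hxp
    · right
      rw [hKp, mem_iInter] at hxp
      push_neg at hxp
      obtain ⟨n0, hn0⟩ := hxp
      rw [hKm, mem_iInter]
      intro n
      rcases hEF (max n n0) with h1 | h1
      · exact absurd (hcEanti n0 _ (le_max_right n n0) h1) hn0
      · exact hcFanti n _ (le_max_left n n0) h1
  -- separation of the complement
  obtain ⟨A, B, hA, hB, hABu, hABi, hAne, hBne⟩ := stmt15_sep hJopen.isClosed_compl hdisc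
  have hfrJc : frontier J ⊆ A ∪ B := by
    rw [hABu, hfr]; exact fun x hx => hx.2
  have hJne : J.Nonempty := ⟨(h.symm 0 : ↥J), (h.symm 0).2⟩
  -- the frontier meets each piece of the separation
  have hmeet : ∀ P Q : Set X, IsClosed P → IsClosed Q → P ∪ Q = Jᶜ → P ∩ Q = ∅ →
      P.Nonempty → (frontier J ∩ P).Nonempty := by
    intro P Q hP hQ hu hi hPne
    have hPJc : P ⊆ Jᶜ := hu ▸ subset_union_left
    by_contra hcon
    rw [not_nonempty_iff_eq_empty] at hcon
    have hclJP : closure J ∩ P = ∅ := by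
      rw [eq_empty_iff_forall_notMem]
      rintro x ⟨hx1, hx2⟩
      by_cases hxJ : x ∈ J
      · exact hPJc hx2 hxJ
      · exact (eq_empty_iff_forall_notMem.1 hcon x) ⟨hfr ▸ ⟨hx1, hxJ⟩, hx2⟩
    have hPc_eq : Pᶜ = J ∪ Q := by
      ext x
      constructor
      · intro hx
        by_cases hxJ : x ∈ J
        · exact Or.inl hxJ
        · rcases (show x ∈ P ∪ Q by rw [hu]; exact hxJ) with h1 | h1
          · exact absurd h1 hx
          · exact Or.inr h1
      · rintro (hx | hx)
        · exact fun hc => hPJc hc hx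
        · exact fun hc => (eq_empty_iff_forall_notMem.1 hi x) ⟨hc, hx⟩
    have hPco : IsClosed Pᶜ := by
      rw [hPc_eq]
      refine isClosed_of_closure_subset ?_
      rw [closure_union, hQ.closure_eq]
      refine union_subset ?_ subset_union_right
      intro x hx
      by_cases hxJ : x ∈ J
      · exact Or.inl hxJ
      · rcases (show x ∈ P ∪ Q by rw [hu]; exact hxJ) with h1 | h1
        · exact absurd (show x ∈ (∅ : Set X) by rw [← hclJP]; exact ⟨hx, h1⟩)
            (notMem_empty x)
        · exact Or.inr h1
    have hclopen : IsClopen P := ⟨hP, isClosed_compl_iff.1 hPco⟩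
    rcases isClopen_iff.1 hclopen with h0 | h0
    · exact absurd h0 (nonempty_iff_ne_empty.1 hPne)
    · obtain ⟨j, hj⟩ := hJne
      exact hPJc (h0 ▸ mem_univ j) hj
  have hfrA : (frontier J ∩ A).Nonempty := hmeet A B hA hB hABu hABi hAne
  have hfrB : (frontier J ∩ B).Nonempty := hmeet B A hB hA
    (by rw [union_comm]; exact hABu) (by rw [inter_comm]; exact hABi) hBne
  -- each end cluster set lies on one side
  have hside : ∀ K : Set X, IsPreconnected K → K ⊆ frontier J → K ⊆ A ∨ K ⊆ B := by
    intro K hK hKfr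
    have hsub : K ⊆ A ∪ B := hKfr.trans hfrJc
    by_cases h1 : (K ∩ A).Nonempty
    · by_cases h2 : (K ∩ B).Nonempty
      · obtain ⟨y, -, hyA, hyB⟩ := isPreconnected_closed_iff.1 hK A B hA hB hsub h1 h2
        exact absurd (show y ∈ (∅ : Set X) by rw [← hABi]; exact ⟨hyA, hyB⟩)
          (notMem_empty y)
      · refine Or.inl fun y hy => ?_
        rcases hsub hy with hA' | hB'
        · exact hA'
        · exact absurd ⟨y, hy, hB'⟩ h2
    · refine Or.inr fun y hy => ?_
      rcases hsub hy with hA' | hB'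
      · exact absurd ⟨y, hy, hA'⟩ h1
      · exact hB'
  have hfreq : Kp ∪ Km = frontier J := (union_subset hKpfr hKmfr).antisymm hfrsub
  have hcontr : ∀ P : Set X, Kp ⊆ P → Km ⊆ P → (frontier J ∩ Pᶜ).Nonempty → False := by
    intro P hp hm ⟨x, hx1, hx2⟩
    rcases hfreq ▸ hx1 with h1 | h1
    · exact hx2 (hp h1)
    · exact hx2 (hm h1)
  rcases hside Kp hKpconn hKpfr with hp | hp <;>
    rcases hside Km hKmconn hKmfr with hm | hm
  · refine absurd hfrB fun ⟨x, hx1, hx2⟩ => ?_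
    rcases hfreq ▸ hx1 with h1 | h1
    · exact (eq_empty_iff_forall_notMem.1 hABi x) ⟨hp h1, hx2⟩
    · exact (eq_empty_iff_forall_notMem.1 hABi x) ⟨hm h1, hx2⟩
  · have hdisjKK : Kp ∩ Km = ∅ :=
      eq_empty_of_subset_empty (hABi ▸ fun x hx => ⟨hp hx.1, hm hx.2⟩)
    exact stmt15_two_comps hKpconn hKmconn hKpcl hKmcl hKpne hKmne hfreq hdisjKK
  · have hdisjKK : Kp ∩ Km = ∅ :=
      eq_empty_of_subset_empty (hABi ▸ fun x hx => ⟨hm hx.2, hp hx.1⟩)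
    exact stmt15_two_comps hKpconn hKmconn hKpcl hKmcl hKpne hKmne hfreq hdisjKK
  · refine absurd hfrA fun ⟨x, hx1, hx2⟩ => ?_
    rcases hfreq ▸ hx1 with h1 | h1
    · exact (eq_empty_iff_forall_notMem.1 hABi x) ⟨hx2, hp h1⟩
    · exact (eq_empty_iff_forall_notMem.1 hABi x) ⟨hx2, hm h1⟩
end

section
/- Let X be a connected compact Hausdorff space and J a free interval of X. If there exists a subinterval K of J (i.e. a subset of J corresponding to a subinterval of the real interval under the homeomorphism) such that X \ K is disconnected, then X \ J is disconnected. -/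
/-- Auxiliary: if `L ⊆ ℝ` is nonempty and downward closed, then attaching the
image of `L` (under the chart of a free interval) to `Jᶜ` keeps preconnectedness. -/
lemma stmt16_aux {X : Type*} [TopologicalSpace X] [CompactSpace X] [T2Space X]
    {J : Set X} (e : ↥J ≃ₜ ℝ)
    {L : Set ℝ} (hLdown : ∀ ⦃x⦄, x ∈ L → ∀ ⦃y⦄, y ≤ x → y ∈ L) (hLne : L.Nonempty)
    (hJc : IsPreconnected (Jᶜ : Set X)) :
    IsPreconnected (Jᶜ ∪ Subtype.val '' (e.symm '' L)) := by
  obtain ⟨l₀, hl₀⟩ := hLne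
  set A : Set X := Subtype.val '' (e.symm '' L) with hAdef
  set C : ℕ → Set X := fun n => closure (Subtype.val '' (e.symm '' Set.Iic (l₀ - n)))
    with hCdef
  have hCsub : ∀ n, C (n + 1) ⊆ C n := by
    intro n
    apply closure_mono
    apply Set.image_mono
    apply Set.image_mono
    intro x hx
    simp only [Set.mem_Iic] at hx ⊢
    push_cast
    push_cast at hx
    linarith
  have hCne : ∀ n, (C n).Nonempty := by
    intro n
    exact ⟨_, subset_closure (Set.mem_image_of_mem _
      (Set.mem_image_of_mem _ (Set.self_mem_Iic (a := l₀ - n))))⟩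
  obtain ⟨c, hc⟩ := IsCompact.nonempty_iInter_of_sequence_nonempty_isCompact_isClosed
    C hCsub hCne isClosed_closure.isCompact (fun n => isClosed_closure)
  simp only [Set.mem_iInter] at hc
  -- c is not in J
  have hcJ : c ∈ (Jᶜ : Set X) := by
    by_contra h
    have hcJ' : c ∈ J := not_not.mp h
    set c' : ↥J := ⟨c, hcJ'⟩ with hc'
    obtain ⟨n, hn⟩ := exists_nat_gt (l₀ - e c')
    have h1 : c' ∈ closure (e.symm '' Set.Iic (l₀ - n)) := by
      rw [closure_subtype]
      exact hc n
    have h2 : e.symm '' Set.Iic (l₀ - n) = e ⁻¹' Set.Iic (l₀ - n) := by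
      ext y
      constructor
      · rintro ⟨x, hx, rfl⟩
        simpa using hx
      · intro hy
        exact ⟨e y, hy, e.symm_apply_apply y⟩
    rw [h2] at h1
    have h3 := e.continuous.closure_preimage_subset _ h1
    rw [closure_Iic] at h3
    simp only [Set.mem_preimage, Set.mem_Iic] at h3
    linarith
  -- c is in the closure of A
  have hcA : c ∈ closure A := by
    refine closure_mono ?_ (hc 0)
    apply Set.image_mono
    apply Set.image_mono
    intro x hx
    simp only [Set.mem_Iic, Nat.cast_zero, sub_zero] at hx
    exact hLdown hl₀ hx
  -- A is preconnected
  have hLpre : IsPreconnected L := by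
    have : L.OrdConnected := ⟨fun x hx y hy z hz => hLdown hy hz.2⟩
    exact this.isPreconnected
  have hApre : IsPreconnected A := by
    have := hLpre.image (fun r => (Subtype.val (e.symm r) : X))
      ((continuous_subtype_val.comp e.symm.continuous).continuousOn)
    rwa [hAdef, Set.image_image]
  have hAc : IsPreconnected (A ∪ {c}) :=
    hApre.subset_closure Set.subset_union_left
      (Set.union_subset subset_closure (Set.singleton_subset_iff.2 hcA))
  have hu : IsPreconnected ((Jᶜ : Set X) ∪ (A ∪ {c})) :=
    IsPreconnected.union c hcJ (Or.inr rfl) hJc hAc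
  have heq : (Jᶜ : Set X) ∪ (A ∪ {c}) = Jᶜ ∪ A := by
    ext x
    simp only [Set.mem_union, Set.mem_singleton_iff]
    constructor
    · rintro (h | h | rfl)
      · exact Or.inl h
      · exact Or.inr h
      · exact Or.inl hcJ
    · rintro (h | h)
      · exact Or.inl h
      · exact Or.inr (Or.inl h)
  rwa [heq] at hu

/-- If `X` is a connected compact Hausdorff space and `J` a free interval
(identified with ℝ through a homeomorphism `e`) containing a subinterval `K` such that
`X \ K` is disconnected, then `X \ J` is disconnected. -/
theorem stmt16 {X : Type*} [TopologicalSpace X] [CompactSpace X] [ConnectedSpace X]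
    [T2Space X] (J : Set X) (hJopen : IsOpen J) (e : ↥J ≃ₜ ℝ)
    (K : Set X) (hKJ : K ⊆ J) (hKne : K.Nonempty)
    (hKint : (e '' {x : ↥J | (x : X) ∈ K}).OrdConnected)
    (hKdisc : ¬ IsPreconnected (Kᶜ : Set X)) :
    ¬ IsPreconnected (Jᶜ : Set X) := by
  intro hJc
  apply hKdisc
  set S : Set ℝ := e '' {x : ↥J | (x : X) ∈ K} with hSdef
  obtain ⟨k, hk⟩ := hKne
  set s₀ : ℝ := e ⟨k, hKJ hk⟩ with hs₀def
  have hs₀S : s₀ ∈ S := Set.mem_image_of_mem _ hk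
  set L : Set ℝ := {x | x ∉ S ∧ x ≤ s₀} with hLdef
  set R : Set ℝ := {x | x ∉ S ∧ s₀ ≤ x} with hRdef
  have hLdown : ∀ ⦃x⦄, x ∈ L → ∀ ⦃y⦄, y ≤ x → y ∈ L := by
    intro x hx y hyx
    refine ⟨fun hyS => hx.1 (hKint.out hyS hs₀S ⟨hyx, hx.2⟩), le_trans hyx hx.2⟩
  have hRup : ∀ ⦃x⦄, x ∈ R → ∀ ⦃y⦄, x ≤ y → y ∈ R := by
    intro x hx y hxy
    refine ⟨fun hyS => hx.1 (hKint.out hs₀S hyS ⟨hx.2, hxy⟩), le_trans hx.2 hxy⟩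
  -- Jᶜ is nonempty
  have hJcne : (Jᶜ : Set X).Nonempty := by
    rw [Set.nonempty_compl]
    intro h
    have h1 : CompactSpace ↥J := isCompact_iff_compactSpace.mp (h ▸ isCompact_univ)
    have h2 : CompactSpace ℝ := e.compactSpace
    exact (not_compactSpace_iff.mpr (inferInstance : NoncompactSpace ℝ)) h2
  obtain ⟨p, hp⟩ := hJcne
  -- the two halves
  have hLside : IsPreconnected ((Jᶜ : Set X) ∪ Subtype.val '' (e.symm '' L)) := by
    rcases Set.eq_empty_or_nonempty L with h | h
    · simpa [h] using hJc
    · exact stmt16_aux e hLdown h hJc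
  have hRside : IsPreconnected ((Jᶜ : Set X) ∪ Subtype.val '' (e.symm '' R)) := by
    rcases Set.eq_empty_or_nonempty R with h | h
    · simpa [h] using hJc
    · set e₂ : ↥J ≃ₜ ℝ := e.trans (Homeomorph.neg ℝ) with he₂
      set L₂ : Set ℝ := (fun x => -x) ⁻¹' R with hL₂
      have hL₂down : ∀ ⦃x⦄, x ∈ L₂ → ∀ ⦃y⦄, y ≤ x → y ∈ L₂ := by
        intro x hx y hyx
        exact hRup hx (by simpa using neg_le_neg hyx)
      have hL₂ne : L₂.Nonempty := by
        obtain ⟨r, hr⟩ := h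
        exact ⟨-r, by simpa [hL₂] using hr⟩
      have himg : e₂.symm '' L₂ = e.symm '' R := by
        have : e₂.symm '' L₂ = e.symm '' ((fun x : ℝ => -x) '' L₂) := by
          rw [Set.image_image]
          rfl
        rw [this]
        exact congrArg (Set.image e.symm) (Set.image_preimage_eq R neg_surjective)
      have := stmt16_aux e₂ hL₂down hL₂ne hJc
      rwa [himg] at this
  -- Kᶜ is the union of the two halves
  have hKeq : (Kᶜ : Set X) =
      ((Jᶜ : Set X) ∪ Subtype.val '' (e.symm '' L)) ∪
      ((Jᶜ : Set X) ∪ Subtype.val '' (e.symm '' R)) := by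
    ext x
    simp only [Set.mem_union, Set.mem_compl_iff]
    constructor
    · intro hxK
      by_cases hxJ : x ∈ J
      · set x' : ↥J := ⟨x, hxJ⟩ with hx'
        have hxS : e x' ∉ S := by
          intro hxS
          obtain ⟨t, ht, het⟩ := hxS
          have ht' : t = x' := e.injective het
          rw [ht'] at ht
          exact hxK ht
        have hmem : ∀ r : ℝ, x = (e.symm r : X) ↔ r = e x' := by
          intro r
          constructor
          · intro hr
            have : e.symm r = x' := Subtype.ext hr.symm
            rw [← this, Homeomorph.apply_symm_apply]
          · intro hr
            rw [hr, Homeomorph.symm_apply_apply]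
        rcases le_total (e x') s₀ with hle | hle
        · refine Or.inl (Or.inr ⟨e.symm (e x'), ⟨e x', ⟨hxS, hle⟩, rfl⟩, ?_⟩)
          rw [Homeomorph.symm_apply_apply]
        · refine Or.inr (Or.inr ⟨e.symm (e x'), ⟨e x', ⟨hxS, hle⟩, rfl⟩, ?_⟩)
          rw [Homeomorph.symm_apply_apply]
      · exact Or.inl (Or.inl hxJ)
    · rintro ((hxJ | ⟨y, ⟨r, hrL, hry⟩, hyx⟩) | (hxJ | ⟨y, ⟨r, hrR, hry⟩, hyx⟩)) hxK
      · exact hxJ (hKJ hxK)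
      · apply hrL.1
        refine ⟨y, ?_, ?_⟩
        · simpa [hyx] using hxK
        · rw [← hry, Homeomorph.apply_symm_apply]
      · exact hxJ (hKJ hxK)
      · apply hrR.1
        refine ⟨y, ?_, ?_⟩
        · simpa [hyx] using hxK
        · rw [← hry, Homeomorph.apply_symm_apply]
  rw [hKeq]
  exact IsPreconnected.union p (Or.inl hp) (Or.inl hp) hLside hRside
end

section
/- Let X be a compact Hausdorff space and f : X → X a continuous map. Suppose there is a nonempty open set G ⊆ X with f(G) ⊆ f(X \ G). Then the dynamical system (X, f) is not minimal, i.e. there exists a point x ∈ X whose forward orbit {f^n(x) : n ≥ 0} is not dense in X. -/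
/-- On a compact Hausdorff space, a continuous map admitting a redundant
open set (a nonempty open `G` with `f(G) ⊆ f(X \ G)`) is not minimal: some forward orbit
is not dense. -/
theorem stmt18 {X : Type*} [TopologicalSpace X] [CompactSpace X] [T2Space X]
    (f : X → X) (hf : Continuous f) (G : Set X) (hGne : G.Nonempty) (hGopen : IsOpen G)
    (hred : f '' G ⊆ f '' Gᶜ) :
    ∃ x : X, ¬ Dense (Set.range fun n : ℕ => f^[n] x) := by
  by_contra h
  push_neg at h
  obtain ⟨g, hg⟩ := hGne
  -- Gᶜ is nonempty
  have hGc : Gᶜ.Nonempty := by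
    rcases hred ⟨g, hg, rfl⟩ with ⟨z, hz, -⟩
    exact ⟨z, hz⟩
  -- f is surjective
  have hsurj : Set.range f = Set.univ := by
    have hc : IsClosed (Set.range f) := (isCompact_range hf).isClosed
    have hsub : (Set.range fun n : ℕ => f^[n] (f g)) ⊆ Set.range f := by
      rintro _ ⟨n, rfl⟩
      exact ⟨f^[n] g, (Function.iterate_succ_apply' f n g ▸
        (Function.iterate_succ_apply f n g).symm : f (f^[n] g) = f^[n] (f g))⟩
    have := hc.closure_subset_iff.mpr hsub
    rw [(h (f g)).closure_eq] at this
    exact Set.eq_univ_of_univ_subset this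
  -- hence f '' Gᶜ = univ
  have himg : f '' Gᶜ = Set.univ := by
    apply Set.eq_univ_of_univ_subset
    rw [← hsurj, ← Set.image_univ, ← Set.union_compl_self G, Set.image_union]
    exact Set.union_subset hred le_rfl
  -- the nested sequence of closed sets
  set K : ℕ → Set X := fun n => Nat.rec Gᶜ (fun _ Kn => Gᶜ ∩ f ⁻¹' Kn) n with hK
  have hK0 : K 0 = Gᶜ := rfl
  have hKs : ∀ n, K (n + 1) = Gᶜ ∩ f ⁻¹' (K n) := fun n => rfl
  have hKG : ∀ n, K n ⊆ Gᶜ := by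
    intro n
    cases n with
    | zero => exact le_rfl
    | succ n => rw [hKs]; exact Set.inter_subset_left
  have hKclosed : ∀ n, IsClosed (K n) := by
    intro n
    induction n with
    | zero => exact hGopen.isClosed_compl
    | succ n ih => rw [hKs]; exact hGopen.isClosed_compl.inter (ih.preimage hf)
  have hKimg : ∀ n, f '' K (n + 1) = K n := by
    intro n
    rw [hKs, Set.image_inter_preimage, himg, Set.univ_inter]
  have hKne : ∀ n, (K n).Nonempty := by
    intro n
    induction n with
    | zero => exact hGc
    | succ n ih => exact (Set.image_nonempty (f := f)).mp (hKimg n ▸ ih)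
  have hKmono : ∀ n, K (n + 1) ⊆ K n := by
    intro n
    induction n with
    | zero => rw [hK0]; exact hKG 1
    | succ n ih =>
      rw [hKs (n + 1), hKs n]
      exact Set.inter_subset_inter le_rfl (Set.preimage_mono ih)
  -- a point in the intersection
  obtain ⟨x, hx⟩ := IsCompact.nonempty_iInter_of_sequence_nonempty_isCompact_isClosed
    K hKmono hKne (hKclosed 0).isCompact hKclosed
  have hxmem : ∀ n, x ∈ K n := Set.mem_iInter.mp hx
  -- the orbit of x stays in the intersection
  have hstep : ∀ y : X, (∀ n, y ∈ K n) → ∀ n, f y ∈ K n := by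
    intro y hy n
    have := hy (n + 1)
    rw [hKs] at this
    exact this.2
  have horbit : ∀ m n, f^[m] x ∈ K n := by
    intro m
    induction m with
    | zero => exact hxmem
    | succ m ih =>
      intro n
      rw [Function.iterate_succ_apply']
      exact hstep _ ih n
  -- hence the orbit of x avoids G, contradicting density
  have hcl : closure (Set.range fun n : ℕ => f^[n] x) ⊆ Gᶜ := by
    apply hGopen.isClosed_compl.closure_subset_iff.mpr
    rintro _ ⟨m, rfl⟩
    exact hKG 0 (horbit m 0)
  have : g ∈ Gᶜ := hcl ((h x).closure_eq ▸ Set.mem_univ g)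
  exact this hg
end

section
/- Let X be a connected topological space in which there is a subset C, homeomorphic to a closed real interval [x₁, x₃] via an embedding with image lying in a free interval J of X, whose three points x₁ ≺ x₂ ≺ x₃ lie in J; then any connected subset D of X containing x₁, x₂, x₃ must contain the subarc [x₁, x₂] of J or the subarc [x₂, x₃] of J. -/
/-- assertion (A): Let `X` be a connected Hausdorff space with a free
interval `J` (identifying homeomorphism `e : J ≃ₜ ℝ`), and let `x₁ ≺ x₂ ≺ x₃` be three
points of `J` (so that the subarc `[x₁, x₃]` of `J` is an embedded closed interval of
`X` lying in `J`). Then every connected subset `D` of `X` containing `x₁, x₂, x₃`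
contains the subarc `[x₁, x₂]` of `J` or the subarc `[x₂, x₃]` of `J`. -/
theorem stmt19 {X : Type*} [TopologicalSpace X] [ConnectedSpace X] [T2Space X]
    (J : Set X) (hJopen : IsOpen J) (e : ↥J ≃ₜ ℝ)
    (x₁ x₂ x₃ : ↥J) (h12 : e x₁ < e x₂) (h23 : e x₂ < e x₃)
    (D : Set X) (hD : IsConnected D)
    (h1 : (x₁ : X) ∈ D) (h2 : (x₂ : X) ∈ D) (h3 : (x₃ : X) ∈ D) :
    (Subtype.val '' {z : ↥J | e x₁ ≤ e z ∧ e z ≤ e x₂} ⊆ D) ∨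
      (Subtype.val '' {z : ↥J | e x₂ ≤ e z ∧ e z ≤ e x₃} ⊆ D) := by
  by_contra hcon
  push_neg at hcon
  obtain ⟨hA, hB⟩ := hcon
  rw [Set.not_subset] at hA hB
  obtain ⟨_, ⟨p, hp, rfl⟩, hpD⟩ := hA
  obtain ⟨_, ⟨q, hq, rfl⟩, hqD⟩ := hB
  -- strict inequalities
  have hep1 : e x₁ < e p :=
    hp.1.lt_of_ne fun h => hpD (by rw [show p = x₁ from e.injective h.symm]; exact h1)
  have hep2 : e p < e x₂ :=
    hp.2.lt_of_ne fun h => hpD (by rw [show p = x₂ from e.injective h]; exact h2)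
  have heq2 : e x₂ < e q :=
    hq.1.lt_of_ne fun h => hqD (by rw [show q = x₂ from e.injective h.symm]; exact h2)
  have heq3 : e q < e x₃ :=
    hq.2.lt_of_ne fun h => hqD (by rw [show q = x₃ from e.injective h]; exact h3)
  set U : Set X := Subtype.val '' (e ⁻¹' Set.Ioo (e p) (e q)) with hU
  set K : Set X := Subtype.val '' (e ⁻¹' Set.Icc (e p) (e q)) with hK
  have hUopen : IsOpen U := hJopen.isOpenMap_subtype_val _ (isOpen_Ioo.preimage e.continuous)
  have hKcomp : IsCompact K :=
    (e.isCompact_preimage.mpr isCompact_Icc).image continuous_subtype_val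
  have hUK : U ⊆ K := Set.image_mono (Set.preimage_mono Set.Ioo_subset_Icc_self)
  have hclKU : closure U ⊆ K := closure_minimal hUK hKcomp.isClosed
  -- key: D ∩ closure U ⊆ U
  have key : ∀ x ∈ D, x ∈ closure U → x ∈ U := by
    intro x hxD hxcl
    obtain ⟨z, hz, rfl⟩ := hclKU hxcl
    rcases eq_or_lt_of_le hz.1 with h | h
    · exact absurd hxD (by rw [show z = p from e.injective h.symm]; exact hpD)
    rcases eq_or_lt_of_le hz.2 with h' | h'
    · exact absurd hxD (by rw [show z = q from e.injective h']; exact hqD)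
    exact ⟨z, ⟨h, h'⟩, rfl⟩
  have hx1notcl : (x₁ : X) ∉ closure U := by
    intro hxcl
    obtain ⟨z, hz, hzval⟩ := hclKU hxcl
    have : z = x₁ := Subtype.val_injective hzval
    subst this
    exact absurd hz.1 (not_le.mpr hep1)
  have hsub : D ⊆ U ∪ (closure U)ᶜ := by
    intro x hxD
    by_cases h : x ∈ closure U
    · exact Or.inl (key x hxD h)
    · exact Or.inr h
  have hne1 : (D ∩ U).Nonempty := ⟨x₂, h2, ⟨x₂, ⟨hep2, heq2⟩, rfl⟩⟩
  have hne2 : (D ∩ (closure U)ᶜ).Nonempty := ⟨x₁, h1, hx1notcl⟩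
  obtain ⟨x, -, hxU, hxncl⟩ := hD.isPreconnected U (closure U)ᶜ hUopen
    (isClosed_closure.isOpen_compl) hsub hne1 hne2
  exact hxncl (subset_closure hxU)
end
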